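/- Let M be an infinite Hermitian positive definite matrix, z₀ ∈ ℂ, and let (φ_n)_{n≥0} be the orthonormal polynomials of M: φ_n(z) = Σ_{k=0}^n v_n(k) z^k where each v_n is supported on {0,…,n}, v_n(n) is real and positive, and B_M(v_n, v_m) = 1 if n = m and 0 otherwise. Then: if Σ_{n=0}^∞ |φ_n(z₀)|² < ∞ then γ_{z₀}(M) = 1 / Σ_{n=0}^∞ |φ_n(z₀)|², and if Σ_{n=0}^∞ |φ_n(z₀)|² = ∞ then γ_{z₀}(M) = 0. In particular γ_{z₀}(M) > 0 if and only if Σ_{n=0}^∞ |φ_n(z₀)|² < ∞. -/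

import Mathlib

open Finset

/-- The sesquilinear form associated with an infinite matrix `M`:
`B_M(v,w) = Σ_{i,j} v_i · M(i,j) · conj(w_j)` for finitely supported `v, w`. -/
noncomputable def BM (M : ℕ → ℕ → ℂ) (v w : ℕ →₀ ℂ) : ℂ :=
  ∑ i ∈ v.support, ∑ j ∈ w.support, v i * M i j * (starRingEnd ℂ) (w j)

/-- The quadratic form `Q_M(v) = B_M(v,v)` (its real part; for Hermitian `M` it is real). -/
noncomputable def QM (M : ℕ → ℕ → ℂ) (v : ℕ →₀ ℂ) : ℝ :=
  (BM M v v).re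

/-- `M` is an (infinite) Hermitian matrix. -/
def IsHermitianMatrix (M : ℕ → ℕ → ℂ) : Prop :=
  ∀ i j, M j i = (starRingEnd ℂ) (M i j)

/-- `M` is positive definite: `Q_M(v) > 0` for every nonzero finitely supported `v`. -/
def IsPosDef (M : ℕ → ℕ → ℂ) : Prop :=
  ∀ v : ℕ →₀ ℂ, v ≠ 0 → 0 < QM M v

/-- `γ_{z₀}(M) = inf { Q_M(v) : v finitely supported, Σ_k v_k z₀^k = 1 }`. -/
noncomputable def gammaZ (M : ℕ → ℕ → ℂ) (z₀ : ℂ) : ℝ :=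
  sInf {x | ∃ v : ℕ →₀ ℂ, (∑ k ∈ v.support, v k * z₀ ^ k) = 1 ∧ QM M v = x}

lemma BM_eq_sum (M : ℕ → ℕ → ℂ) (v w : ℕ →₀ ℂ) {s t : Finset ℕ}
    (hs : v.support ⊆ s) (ht : w.support ⊆ t) :
    BM M v w = ∑ i ∈ s, ∑ j ∈ t, v i * M i j * (starRingEnd ℂ) (w j) := by
  unfold BM
  rw [Finset.sum_subset hs]
  · refine Finset.sum_congr rfl fun i _ => ?_
    refine Finset.sum_subset ht fun j _ hj => ?_
    simp [Finsupp.notMem_support_iff.mp hj]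
  · intro i _ hi
    simp [Finsupp.notMem_support_iff.mp hi]

lemma BM_add_left (M : ℕ → ℕ → ℂ) (v w u : ℕ →₀ ℂ) :
    BM M (v + w) u = BM M v u + BM M w u := by
  rw [BM_eq_sum M (v + w) u (Finsupp.support_add) (subset_rfl),
      BM_eq_sum M v u (Finset.subset_union_left) (subset_rfl),
      BM_eq_sum M w u (Finset.subset_union_right) (subset_rfl),
      ← Finset.sum_add_distrib]
  refine Finset.sum_congr rfl fun i _ => ?_
  rw [← Finset.sum_add_distrib]
  refine Finset.sum_congr rfl fun j _ => ?_
  simp [Finsupp.add_apply]; ring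

lemma BM_smul_left (M : ℕ → ℕ → ℂ) (c : ℂ) (v u : ℕ →₀ ℂ) :
    BM M (c • v) u = c * BM M v u := by
  rw [BM_eq_sum M (c • v) u (Finsupp.support_smul) (subset_rfl)]
  unfold BM; rw [Finset.mul_sum]
  refine Finset.sum_congr rfl fun i _ => ?_
  rw [Finset.mul_sum]
  refine Finset.sum_congr rfl fun j _ => ?_
  simp [Finsupp.smul_apply]; ring

lemma BM_smul_right (M : ℕ → ℕ → ℂ) (c : ℂ) (v u : ℕ →₀ ℂ) :
    BM M u (c • v) = (starRingEnd ℂ) c * BM M u v := by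
  rw [BM_eq_sum M u (c • v) (subset_rfl) (Finsupp.support_smul)]
  unfold BM; rw [Finset.mul_sum]
  refine Finset.sum_congr rfl fun i _ => ?_
  rw [Finset.mul_sum]
  refine Finset.sum_congr rfl fun j _ => ?_
  simp [Finsupp.smul_apply, map_mul]; ring

lemma BM_sum_left (M : ℕ → ℕ → ℂ) (s : Finset ℕ) (f : ℕ → (ℕ →₀ ℂ)) (u : ℕ →₀ ℂ) :
    BM M (∑ n ∈ s, f n) u = ∑ n ∈ s, BM M (f n) u := by
  induction s using Finset.cons_induction with
  | empty => simp [BM]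
  | cons a s ha ih => rw [Finset.sum_cons, Finset.sum_cons, BM_add_left, ih]

lemma BM_sum_right (M : ℕ → ℕ → ℂ) (s : Finset ℕ) (f : ℕ → (ℕ →₀ ℂ)) (u : ℕ →₀ ℂ) :
    BM M u (∑ n ∈ s, f n) = ∑ n ∈ s, BM M u (f n) := by
  induction s using Finset.cons_induction with
  | empty => simp [BM]
  | cons a s ha ih =>
    rw [Finset.sum_cons, Finset.sum_cons, ← ih]
    rw [BM_eq_sum M u (f a + ∑ n ∈ s, f n) (subset_rfl) (Finsupp.support_add),
        BM_eq_sum M u (f a) (subset_rfl) (Finset.subset_union_left),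
        BM_eq_sum M u (∑ n ∈ s, f n) (subset_rfl) (Finset.subset_union_right),
        ← Finset.sum_add_distrib]
    refine Finset.sum_congr rfl fun i _ => ?_
    rw [← Finset.sum_add_distrib]
    refine Finset.sum_congr rfl fun j _ => ?_
    simp [Finsupp.add_apply, map_add]; ring

noncomputable def evz (z₀ : ℂ) (v : ℕ →₀ ℂ) : ℂ := ∑ k ∈ v.support, v k * z₀ ^ k

lemma evz_eq_sum (z₀ : ℂ) (v : ℕ →₀ ℂ) {s : Finset ℕ} (hs : v.support ⊆ s) :
    evz z₀ v = ∑ k ∈ s, v k * z₀ ^ k := by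
  refine Finset.sum_subset hs fun k _ hk => ?_
  simp [Finsupp.notMem_support_iff.mp hk]

lemma evz_add (z₀ : ℂ) (v w : ℕ →₀ ℂ) : evz z₀ (v + w) = evz z₀ v + evz z₀ w := by
  rw [evz_eq_sum z₀ (v + w) (Finsupp.support_add),
      evz_eq_sum z₀ v (Finset.subset_union_left),
      evz_eq_sum z₀ w (Finset.subset_union_right), ← Finset.sum_add_distrib]
  exact Finset.sum_congr rfl fun k _ => by simp [Finsupp.add_apply]; ring

lemma evz_smul (z₀ : ℂ) (c : ℂ) (v : ℕ →₀ ℂ) : evz z₀ (c • v) = c * evz z₀ v := by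
  rw [evz_eq_sum z₀ (c • v) (Finsupp.support_smul)]
  unfold evz; rw [Finset.mul_sum]
  exact Finset.sum_congr rfl fun k _ => by simp [Finsupp.smul_apply]; ring

lemma evz_sum (z₀ : ℂ) (s : Finset ℕ) (f : ℕ → (ℕ →₀ ℂ)) :
    evz z₀ (∑ n ∈ s, f n) = ∑ n ∈ s, evz z₀ (f n) := by
  induction s using Finset.cons_induction with
  | empty => simp [evz]
  | cons a s ha ih => rw [Finset.sum_cons, Finset.sum_cons, evz_add, ih]

lemma span_lemma (v : ℕ → (ℕ →₀ ℂ)) (hsupp : ∀ n, (v n).support ⊆ Finset.Iic n)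
    (hne : ∀ n, (v n) n ≠ 0) :
    ∀ N : ℕ, ∀ w : ℕ →₀ ℂ, w.support ⊆ Finset.Iic N →
      ∃ c : ℕ → ℂ, w = ∑ n ∈ Finset.Iic N, c n • v n := by
  intro N
  induction N with
  | zero =>
    intro w hw
    refine ⟨fun _ => w 0 / (v 0) 0, ?_⟩
    rw [show Finset.Iic 0 = {0} from rfl, Finset.sum_singleton]
    ext k
    rcases Nat.eq_zero_or_pos k with rfl | hk
    · simp [div_mul_cancel₀ _ (hne 0)]
    · have h1 : w k = 0 := by
        by_contra h
        have := hw (Finsupp.mem_support_iff.mpr h)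
        simp at this; omega
      have h2 : (v 0) k = 0 := by
        by_contra h
        have := hsupp 0 (Finsupp.mem_support_iff.mpr h)
        simp at this; omega
      simp [h1, h2]
  | succ N ih =>
    intro w hw
    set a : ℂ := w (N+1) / (v (N+1)) (N+1) with ha
    have hw' : (w - a • v (N+1)).support ⊆ Finset.Iic N := by
      intro k hk
      have hk1 : (w - a • v (N+1)) k ≠ 0 := Finsupp.mem_support_iff.mp hk
      have hk2 : k ≤ N + 1 := by
        by_contra h
        have h1 : w k = 0 := by
          by_contra h'
          have := hw (Finsupp.mem_support_iff.mpr h')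
          simp at this; omega
        have h2 : (v (N+1)) k = 0 := by
          by_contra h'
          have := hsupp (N+1) (Finsupp.mem_support_iff.mpr h')
          simp at this; omega
        apply hk1; simp [Finsupp.sub_apply, h1, h2]
      have hk3 : k ≠ N + 1 := by
        intro rfl'
        apply hk1
        rw [rfl']
        simp [Finsupp.sub_apply, ha, div_mul_cancel₀ _ (hne (N+1))]
      simp; omega
    obtain ⟨c, hc⟩ := ih (w - a • v (N+1)) hw'
    refine ⟨fun n => if n = N + 1 then a else c n, ?_⟩
    rw [show Finset.Iic (N+1) = insert (N+1) (Finset.Iic N) from by ext k; simp; omega,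
        Finset.sum_insert (by simp)]
    have : ∑ n ∈ Finset.Iic N, (if n = N + 1 then a else c n) • v n
        = ∑ n ∈ Finset.Iic N, c n • v n := by
      refine Finset.sum_congr rfl fun n hn => ?_
      have : n ≠ N + 1 := by simp at hn; omega
      simp [this]
    rw [this, ← hc]
    simp


lemma BM_combo (M : ℕ → ℕ → ℂ) (v : ℕ → (ℕ →₀ ℂ))
    (horth : ∀ n m, BM M (v n) (v m) = if n = m then 1 else 0)
    (c : ℕ → ℂ) (s : Finset ℕ) :
    BM M (∑ n ∈ s, c n • v n) (∑ m ∈ s, c m • v m)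
      = ∑ n ∈ s, (Complex.normSq (c n) : ℂ) := by
  rw [BM_sum_left]
  refine Finset.sum_congr rfl fun n hn => ?_
  rw [BM_smul_left, BM_sum_right, Finset.mul_sum]
  have : ∀ m ∈ s, c n * BM M (v n) (c m • v m)
      = if n = m then c n * (starRingEnd ℂ) (c m) else 0 := by
    intro m _
    rw [BM_smul_right, horth]
    by_cases h : n = m <;> simp [h]
  rw [Finset.sum_congr rfl this, Finset.sum_ite_eq s n
      (fun m => c n * (starRingEnd ℂ) (c m)), if_pos hn, Complex.mul_conj]

lemma QM_combo (M : ℕ → ℕ → ℂ) (v : ℕ → (ℕ →₀ ℂ))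
    (horth : ∀ n m, BM M (v n) (v m) = if n = m then 1 else 0)
    (c : ℕ → ℂ) (s : Finset ℕ) :
    (BM M (∑ n ∈ s, c n • v n) (∑ m ∈ s, c m • v m)).re
      = ∑ n ∈ s, ‖c n‖ ^ 2 := by
  rw [BM_combo M v horth c s, Complex.re_sum]
  exact Finset.sum_congr rfl fun n _ => by rw [Complex.ofReal_re, Complex.sq_norm]

set_option maxHeartbeats 1000000 in
/-- let `M` be Hermitian positive definite, `z₀ ∈ ℂ`, and `(φ_n)` the
orthonormal polynomials of `M` (given by coefficient vectors `v_n` supported on `{0,…,n}`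
with positive real leading coefficient), with `φ_n(z₀) = Σ_k v_n(k) z₀^k`.  If
`Σ_n |φ_n(z₀)|² < ∞` then `γ_{z₀}(M) = 1 / Σ_n |φ_n(z₀)|²`, and if the sum diverges then
`γ_{z₀}(M) = 0`; in particular `γ_{z₀}(M) > 0` iff `Σ_n |φ_n(z₀)|² < ∞`. -/
theorem gammaZ_eq_inv_kernel (M : ℕ → ℕ → ℂ)
    (hHerm : IsHermitianMatrix M) (hPD : IsPosDef M) (z₀ : ℂ)
    (v : ℕ → (ℕ →₀ ℂ))
    (hsupp : ∀ n, (v n).support ⊆ Finset.Iic n)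
    (hlead : ∀ n, ((v n) n).im = 0 ∧ 0 < ((v n) n).re)
    (horth : ∀ n m, BM M (v n) (v m) = if n = m then 1 else 0)
    (φz : ℕ → ℂ) (hφz : ∀ n, φz n = ∑ k ∈ (v n).support, (v n) k * z₀ ^ k) :
    ((Summable (fun n => ‖φz n‖ ^ 2) →
        gammaZ M z₀ = 1 / ∑' n, ‖φz n‖ ^ 2) ∧
      (¬ Summable (fun n => ‖φz n‖ ^ 2) → gammaZ M z₀ = 0)) ∧
    (0 < gammaZ M z₀ ↔ Summable (fun n => ‖φz n‖ ^ 2)) := by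
  classical
  set f : ℕ → ℝ := fun n => ‖φz n‖ ^ 2 with hf
  have hfnn : ∀ n, 0 ≤ f n := fun n => sq_nonneg _
  have hne : ∀ n, (v n) n ≠ 0 := by
    intro n h
    have := (hlead n).2
    rw [h] at this; simp at this
  have hφ : ∀ n, φz n = evz z₀ (v n) := hφz
  have hφ0 : φz 0 = (v 0) 0 := by
    rw [hφ 0, evz_eq_sum z₀ (v 0) (hsupp 0),
      show Finset.Iic 0 = {0} from rfl, Finset.sum_singleton, pow_zero, mul_one]
  have hf0 : 0 < f 0 := by
    have h : φz 0 ≠ 0 := by rw [hφ0]; exact hne 0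
    show 0 < ‖φz 0‖ ^ 2
    exact pow_pos (norm_pos_iff.mpr h) 2
  set T : ℕ → ℝ := fun N => ∑ n ∈ Finset.Iic N, f n with hT
  have hTpos : ∀ N, 0 < T N := by
    intro N
    refine Finset.sum_pos' (fun n _ => hfnn n) ⟨0, by simp, hf0⟩
  -- the constraint set
  set A : Set ℝ := {x | ∃ u : ℕ →₀ ℂ, (∑ k ∈ u.support, u k * z₀ ^ k) = 1 ∧ QM M u = x}
    with hA
  have hgamma : gammaZ M z₀ = sInf A := rfl
  -- membership of 1 / T N
  have hmem : ∀ N, (T N)⁻¹ ∈ A := by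
    intro N
    set c : ℕ → ℂ := fun n => (starRingEnd ℂ) (φz n) / (T N : ℂ) with hc
    set w : ℕ →₀ ℂ := ∑ n ∈ Finset.Iic N, c n • v n with hwdef
    have hTne : (T N : ℂ) ≠ 0 := by
      exact_mod_cast (hTpos N).ne'
    have hsum : ∑ n ∈ Finset.Iic N, ((starRingEnd ℂ) (φz n) * φz n) = ((T N : ℝ) : ℂ) := by
      push_cast [hT]
      refine Finset.sum_congr rfl fun n _ => ?_
      rw [mul_comm, Complex.mul_conj]
      norm_cast
      rw [hf]
      exact (Complex.sq_norm _).symm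
    have hev : evz z₀ w = 1 := by
      rw [hwdef, evz_sum]
      have : ∀ n ∈ Finset.Iic N, evz z₀ (c n • v n)
          = ((starRingEnd ℂ) (φz n) * φz n) / (T N : ℂ) := by
        intro n _
        rw [evz_smul, ← hφ n, hc]
        ring
      rw [Finset.sum_congr rfl this, ← Finset.sum_div, hsum, div_self hTne]
    have hq : QM M w = (T N)⁻¹ := by
      show (BM M w w).re = (T N)⁻¹
      rw [hwdef, QM_combo M v horth c (Finset.Iic N)]
      have : ∀ n ∈ Finset.Iic N, ‖c n‖ ^ 2 = f n / (T N) ^ 2 := by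
        intro n _
        rw [hc]
        rw [norm_div, Complex.norm_conj, Complex.norm_real, Real.norm_eq_abs, abs_of_pos (hTpos N)]
        rw [div_pow]
      rw [Finset.sum_congr rfl this, ← Finset.sum_div]
      have hid : ∑ n ∈ Finset.Iic N, f n = T N := rfl
      rw [hid, pow_two, div_mul_eq_div_div, div_self (hTpos N).ne', one_div]
    exact ⟨w, hev, hq⟩
  -- lower bound structure: every element of A is positive and satisfies 1 ≤ x * T N
  have hkey : ∀ x ∈ A, 0 ≤ x ∧ ∃ N, 1 ≤ x * T N := by
    rintro x ⟨u, heval, hqu⟩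
    set N : ℕ := u.support.sup id with hN
    have hsub : u.support ⊆ Finset.Iic N := by
      intro k hk
      simpa using Finset.le_sup (f := id) hk
    obtain ⟨c, hcu⟩ := span_lemma v hsupp hne N u hsub
    have hx : x = ∑ n ∈ Finset.Iic N, ‖c n‖ ^ 2 := by
      rw [← hqu, hcu]
      exact QM_combo M v horth c (Finset.Iic N)
    have hev1 : ∑ n ∈ Finset.Iic N, c n * φz n = 1 := by
      have : evz z₀ u = 1 := heval
      rw [hcu, evz_sum] at this
      rw [← this]
      exact Finset.sum_congr rfl fun n _ => by rw [evz_smul, hφ n]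
    refine ⟨by rw [hx]; exact Finset.sum_nonneg fun n _ => sq_nonneg _, N, ?_⟩
    have h1 : (1 : ℝ) ≤ ∑ n ∈ Finset.Iic N, ‖c n‖ * ‖φz n‖ := by
      have := norm_sum_le (Finset.Iic N) (fun n => c n * φz n)
      rw [hev1] at this
      simpa [norm_mul] using this
    have h2 := Finset.sum_mul_sq_le_sq_mul_sq (Finset.Iic N)
      (fun n => ‖c n‖) (fun n => ‖φz n‖)
    calc (1 : ℝ) = 1 ^ 2 := by ring
      _ ≤ (∑ n ∈ Finset.Iic N, ‖c n‖ * ‖φz n‖) ^ 2 := by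
          refine pow_le_pow_left₀ (by norm_num) h1 2
      _ ≤ (∑ n ∈ Finset.Iic N, ‖c n‖ ^ 2)
            * ∑ n ∈ Finset.Iic N, ‖φz n‖ ^ 2 := h2
      _ = x * T N := by rw [hx]
  have hAnonempty : A.Nonempty := ⟨(T 0)⁻¹, hmem 0⟩
  have hbdd : BddBelow A := ⟨0, fun x hx => (hkey x hx).1⟩
  have hTrange : ∀ N, T N = ∑ n ∈ Finset.range (N + 1), f n := by
    intro N
    refine Finset.sum_congr ?_ (fun _ _ => rfl)
    ext k; simp [Nat.lt_succ_iff]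
  have hupper : ∀ N, sInf A ≤ (T N)⁻¹ := fun N => csInf_le hbdd (hmem N)
  have main1 : Summable f → sInf A = 1 / ∑' n, f n := by
    intro hS
    set S : ℝ := ∑' n, f n with hSdef
    have hSpos : 0 < S := lt_of_lt_of_le hf0 (Summable.le_tsum hS 0 (fun i _ => hfnn i))
    have hTtend : Filter.Tendsto T Filter.atTop (nhds S) := by
      have h1 := hS.hasSum.tendsto_sum_nat
      have h2 : Filter.Tendsto (fun N : ℕ => N + 1) Filter.atTop Filter.atTop :=
        Filter.tendsto_add_atTop_nat 1
      have h3 := h1.comp h2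
      simp only [Function.comp] at h3
      have : T = fun N : ℕ => ∑ i ∈ Finset.range (N + 1), f i := funext hTrange
      rw [this]
      exact h3
    have hlow : 1 / S ≤ sInf A := by
      refine le_csInf hAnonempty fun x hx => ?_
      obtain ⟨hx0, N, hxN⟩ := hkey x hx
      have hTS : T N ≤ S := Summable.sum_le_tsum (Finset.Iic N) (fun i _ => hfnn i) hS
      have : 1 ≤ x * S := le_trans hxN (by nlinarith)
      rw [div_le_iff₀ hSpos]
      linarith
    have hup : sInf A ≤ 1 / S := by
      have hinv : Filter.Tendsto (fun N => (T N)⁻¹) Filter.atTop (nhds S⁻¹) :=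
        hTtend.inv₀ hSpos.ne'
      rw [one_div]
      exact ge_of_tendsto' hinv hupper
    linarith
  have main2 : ¬ Summable f → sInf A = 0 := by
    intro hS
    have hdiv : Filter.Tendsto (fun n : ℕ => ∑ i ∈ Finset.range n, f i)
        Filter.atTop Filter.atTop :=
      (not_summable_iff_tendsto_nat_atTop_of_nonneg hfnn).mp hS
    have hTtend : Filter.Tendsto T Filter.atTop Filter.atTop := by
      have h2 : Filter.Tendsto (fun N : ℕ => N + 1) Filter.atTop Filter.atTop :=
        Filter.tendsto_add_atTop_nat 1
      have h3 := hdiv.comp h2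
      simp only [Function.comp_def] at h3
      have : T = fun N : ℕ => ∑ i ∈ Finset.range (N + 1), f i := funext hTrange
      rw [this]
      exact h3
    have hinv : Filter.Tendsto (fun N => (T N)⁻¹) Filter.atTop (nhds 0) :=
      hTtend.inv_tendsto_atTop
    have hup : sInf A ≤ 0 := ge_of_tendsto' hinv hupper
    have hlow : 0 ≤ sInf A := le_csInf hAnonempty fun x hx => (hkey x hx).1
    linarith
  rw [hgamma]
  refine ⟨⟨main1, main2⟩, ?_⟩
  constructor
  · intro hpos
    by_contra hS
    rw [main2 hS] at hpos
    exact lt_irrefl 0 hpos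
  · intro hS
    rw [main1 hS]
    have hSpos : 0 < ∑' n, f n := lt_of_lt_of_le hf0 (Summable.le_tsum hS 0 (fun i _ => hfnn i))
    positivity
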